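/- Let φ(t) = E e^{t θ₁}, where θ is uniformly distributed on the unit sphere S^{n−1} in ℝⁿ (n ≥ 2). Then φ′(t) ≤ t φ″(t) for every t > 0. -/

import Mathlib

open MeasureTheory Real Set

lemma aux_sinh_le (u : ℝ) (hu : 0 ≤ u) : Real.sinh u ≤ u * Real.cosh u := by
  have hder : ∀ x : ℝ, HasDerivAt (fun x => x * Real.cosh x - Real.sinh x)
      (x * Real.sinh x) x := by
    intro x
    have h := ((hasDerivAt_id x).mul (Real.hasDerivAt_cosh x)).sub (Real.hasDerivAt_sinh x)
    exact h.congr_deriv (by simp only [id]; ring)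
  have hmono : Monotone (fun x => x * Real.cosh x - Real.sinh x) := by
    apply monotone_of_deriv_nonneg (fun x => (hder x).differentiableAt)
    intro x
    rw [(hder x).deriv]
    rcases le_total 0 x with hx | hx
    · exact mul_nonneg hx (Real.sinh_nonneg_iff.2 hx)
    · have h1 : Real.sinh x ≤ 0 := by
        rw [← Real.sinh_zero]; exact Real.sinh_le_sinh.2 hx
      nlinarith
  have := hmono hu
  simp only [Real.sinh_zero, Real.cosh_zero, mul_one, zero_mul, sub_zero, zero_sub] at this
  linarith

lemma aux_key (u : ℝ) : u * Real.sinh u ≤ u ^ 2 * Real.cosh u := by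
  rcases le_total 0 u with hu | hu
  · have := aux_sinh_le u hu
    nlinarith
  · have := aux_sinh_le (-u) (by linarith)
    rw [Real.sinh_neg, Real.cosh_neg] at this
    nlinarith

lemma aux_ptwise (t x : ℝ) (ht : 0 < t) :
    x * Real.exp (t * x) + (-x) * Real.exp (t * -x) ≤
      t * (x ^ 2 * Real.exp (t * x) + x ^ 2 * Real.exp (t * -x)) := by
  have h := aux_key (t * x)
  rw [Real.sinh_eq, Real.cosh_eq] at h
  have h2 : -(t*x) = t * -x := by ring
  rw [h2] at h
  nlinarith [h]


section main
variable {n : ℕ} (σ : Measure (EuclideanSpace ℝ (Fin n))) [IsProbabilityMeasure σ]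

lemma aux_abs_coord (y : EuclideanSpace ℝ (Fin n)) (i : Fin n) : |y i| ≤ ‖y‖ := by
  rw [EuclideanSpace.norm_eq]
  rw [show |y i| = Real.sqrt ((y i)^2) by rw [Real.sqrt_sq_eq_abs]]
  apply Real.sqrt_le_sqrt
  calc (y i)^2 = ‖y i‖^2 := by rw [Real.norm_eq_abs, sq_abs]
  _ ≤ ∑ j, ‖y j‖^2 := Finset.single_le_sum (f := fun j => ‖y j‖^2) (fun j _ => sq_nonneg _) (Finset.mem_univ i)

lemma aux_ae_bound (hsph : σ (Metric.sphere (0 : EuclideanSpace ℝ (Fin n)) 1) = 1)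
    (i : Fin n) : ∀ᵐ y ∂σ, |y i| ≤ 1 := by
  have hmem : ∀ᵐ y ∂σ, y ∈ Metric.sphere (0 : EuclideanSpace ℝ (Fin n)) 1 := by
    rw [ae_iff]
    have := measure_compl (μ := σ) (s := Metric.sphere (0 : EuclideanSpace ℝ (Fin n)) 1) Metric.isClosed_sphere.measurableSet (by simp)
    simp only [hsph, measure_univ] at this
    simpa [Set.compl_def] using this
  filter_upwards [hmem] with y hy
  have : ‖y‖ = 1 := by simpa using hy
  calc |y i| ≤ ‖y‖ := aux_abs_coord y i
  _ = 1 := this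

lemma aux_integrable (hsph : σ (Metric.sphere (0 : EuclideanSpace ℝ (Fin n)) 1) = 1)
    (i : Fin n) (g : ℝ → ℝ) (hg : Continuous g) :
    Integrable (fun y => g (y i)) σ := by
  obtain ⟨C, hC⟩ := (isCompact_Icc (a := (-1:ℝ)) (b := 1)).exists_bound_of_continuousOn
    hg.continuousOn
  have hcont : Continuous fun y : EuclideanSpace ℝ (Fin n) => y i :=
    (EuclideanSpace.proj i).continuous
  refine (integrable_const C).mono' ((hg.comp hcont).aestronglyMeasurable) ?_
  filter_upwards [aux_ae_bound σ hsph i] with y hy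
  exact hC _ (by constructor <;> [linarith [abs_le.1 hy]; linarith [abs_le.1 hy]])

lemma aux_hasDeriv (hsph : σ (Metric.sphere (0 : EuclideanSpace ℝ (Fin n)) 1) = 1)
    (i : Fin n) (g : ℝ → ℝ) (hg : Continuous g) (s₀ : ℝ) :
    HasDerivAt (fun s => ∫ y, g (y i) * Real.exp (s * y i) ∂σ)
      (∫ y, (g (y i) * y i) * Real.exp (s₀ * y i) ∂σ) s₀ := by
  obtain ⟨C, hC⟩ := (isCompact_Icc (a := (-1:ℝ)) (b := 1)).exists_bound_of_continuousOn
    hg.continuousOn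
  have hcont : Continuous fun y : EuclideanSpace ℝ (Fin n) => y i :=
    (EuclideanSpace.proj i).continuous
  have hb := aux_ae_bound σ hsph i
  have key := hasDerivAt_integral_of_dominated_loc_of_deriv_le (μ := σ)
    (F := fun s y => g (y i) * Real.exp (s * y i))
    (F' := fun s y => (g (y i) * y i) * Real.exp (s * y i))
    (bound := fun _ => |C| * Real.exp (|s₀| + 1)) (x₀ := s₀) (s := Metric.ball s₀ 1) (Metric.ball_mem_nhds s₀ one_pos)
    ?_ ?_ ?_ ?_ ?_ ?_
  · exact key.2
  · filter_upwards with s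
    exact (((hg.comp hcont).mul ((continuous_const.mul hcont).rexp)).aestronglyMeasurable)
  · exact aux_integrable σ hsph i (fun x => g x * Real.exp (s₀ * x))
      (hg.mul (by continuity))
  · exact (((hg.comp hcont).mul hcont).mul
      ((continuous_const.mul hcont).rexp)).aestronglyMeasurable
  · filter_upwards [hb] with y hy s hs
    have h1 : |g (y i)| ≤ |C| := by
      have := hC (y i) (abs_le.1 hy |> fun h => ⟨h.1, h.2⟩)
      exact this.trans (le_abs_self C)
    have h2 : s * y i ≤ |s₀| + 1 := by
      have hs' : |s - s₀| < 1 := by simpa [Real.dist_eq] using hs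
      have : |s| ≤ |s₀| + 1 := by
        have := abs_sub_abs_le_abs_sub s s₀
        linarith
      calc s * y i ≤ |s * y i| := le_abs_self _
      _ = |s| * |y i| := abs_mul _ _
      _ ≤ (|s₀| + 1) * 1 := by
          apply mul_le_mul this hy (abs_nonneg _) (by positivity)
      _ = |s₀| + 1 := by ring
    rw [norm_mul, norm_mul, Real.norm_eq_abs, Real.norm_eq_abs, Real.norm_eq_abs,
      Real.abs_exp]
    calc |g (y i)| * |y i| * Real.exp (s * y i)
        ≤ |C| * 1 * Real.exp (|s₀| + 1) := by
          apply mul_le_mul (mul_le_mul h1 hy (abs_nonneg _) (abs_nonneg _))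
            (Real.exp_le_exp.2 h2) (Real.exp_pos _).le (by positivity)
    _ = |C| * Real.exp (|s₀| + 1) := by ring
  · exact integrable_const _
  · filter_upwards with y s _
    have h : HasDerivAt (fun s : ℝ => s * y i) (y i) s := by
      simpa using (hasDerivAt_id s).mul_const (y i)
    have := ((Real.hasDerivAt_exp (s * y i)).comp s h).const_mul (g (y i))
    simpa [mul_comm, mul_assoc, mul_left_comm] using this

end main

section main2
variable {n : ℕ}

lemma aux_symm (σ : Measure (EuclideanSpace ℝ (Fin n))) [IsProbabilityMeasure σ]
    (hrot : ∀ O : EuclideanSpace ℝ (Fin n) ≃ₗᵢ[ℝ] EuclideanSpace ℝ (Fin n), σ.map O = σ)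
    (i : Fin n) (g : ℝ → ℝ) (hg : Continuous g) :
    ∫ y, g (y i) ∂σ = ∫ y, g (-(y i)) ∂σ := by
  classical
  set O : EuclideanSpace ℝ (Fin n) ≃ₗᵢ[ℝ] EuclideanSpace ℝ (Fin n) :=
    LinearIsometryEquiv.piLpCongrRight 2
      (fun j => if j = i then LinearIsometryEquiv.neg ℝ else LinearIsometryEquiv.refl ℝ ℝ)
    with hO
  have hOap : ∀ y : EuclideanSpace ℝ (Fin n), (O y) i = -(y i) := by
    intro y
    simp [hO, LinearIsometryEquiv.piLpCongrRight_apply]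
  have hcont : Continuous fun y : EuclideanSpace ℝ (Fin n) => y i :=
    (EuclideanSpace.proj i).continuous
  have hmeas : AEStronglyMeasurable (fun y : EuclideanSpace ℝ (Fin n) => g (y i)) (σ.map O) := by
    rw [hrot O]
    exact (hg.comp hcont).aestronglyMeasurable
  conv_lhs => rw [← hrot O]
  rw [integral_map (O.continuous.measurable.aemeasurable) hmeas]
  congr 1
  funext y
  rw [show (O y) i = -(y i) from hOap y]

theorem sphere_mgf_deriv_ineq_aux
    (σ : Measure (EuclideanSpace ℝ (Fin n))) [IsProbabilityMeasure σ]
    (hrot : ∀ O : EuclideanSpace ℝ (Fin n) ≃ₗᵢ[ℝ] EuclideanSpace ℝ (Fin n), σ.map O = σ)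
    (hsph : σ (Metric.sphere (0 : EuclideanSpace ℝ (Fin n)) 1) = 1) (i : Fin n) :
    ∀ t : ℝ, 0 < t →
      deriv (fun s => ∫ y, Real.exp (s * y i) ∂σ) t ≤
        t * deriv (deriv fun s => ∫ y, Real.exp (s * y i) ∂σ) t := by
  intro t ht
  have hD : ∀ s, HasDerivAt (fun s => ∫ y, Real.exp (s * y i) ∂σ)
      (∫ y, y i * Real.exp (s * y i) ∂σ) s := by
    intro s
    have h := aux_hasDeriv σ hsph i (fun _ => 1) continuous_const s
    simpa only [one_mul] using h
  have hD2 : ∀ s, HasDerivAt (fun s => ∫ y, y i * Real.exp (s * y i) ∂σ)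
      (∫ y, (y i * y i) * Real.exp (s * y i) ∂σ) s :=
    fun s => aux_hasDeriv σ hsph i (fun x => x) continuous_id s
  have e1 : deriv (fun s => ∫ y, Real.exp (s * y i) ∂σ)
      = fun s => ∫ y, y i * Real.exp (s * y i) ∂σ := funext fun s => (hD s).deriv
  rw [e1, (hD2 t).deriv]
  -- symmetry
  have hsA := aux_symm σ hrot i (fun x => x * Real.exp (t * x))
    (continuous_id.mul ((continuous_const.mul continuous_id).rexp))
  have hsB := aux_symm σ hrot i (fun x => (x * x) * Real.exp (t * x))
    ((continuous_id.mul continuous_id).mul ((continuous_const.mul continuous_id).rexp))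
  simp only [neg_mul_neg] at hsB
  -- integrability
  have intA : Integrable (fun y => y i * Real.exp (t * y i)) σ :=
    aux_integrable σ hsph i (fun x => x * Real.exp (t * x))
      (continuous_id.mul ((continuous_const.mul continuous_id).rexp))
  have intA' : Integrable (fun y => (-(y i)) * Real.exp (t * -(y i))) σ :=
    aux_integrable σ hsph i (fun x => (-x) * Real.exp (t * -x))
      (continuous_neg.mul ((continuous_const.mul continuous_neg).rexp))
  have intB : Integrable (fun y => (y i * y i) * Real.exp (t * y i)) σ :=
    aux_integrable σ hsph i (fun x => (x * x) * Real.exp (t * x))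
      ((continuous_id.mul continuous_id).mul ((continuous_const.mul continuous_id).rexp))
  have intB' : Integrable (fun y => (y i * y i) * Real.exp (t * -(y i))) σ :=
    aux_integrable σ hsph i (fun x => (x * x) * Real.exp (t * -x))
      ((continuous_id.mul continuous_id).mul ((continuous_const.mul continuous_neg).rexp))
  -- pointwise inequality integrated
  have hmono : ∫ y, (y i * Real.exp (t * y i) + (-(y i)) * Real.exp (t * -(y i))) ∂σ ≤
      ∫ y, t * ((y i * y i) * Real.exp (t * y i) + (y i * y i) * Real.exp (t * -(y i))) ∂σ := by
    apply integral_mono (intA.add intA') ((intB.add intB').const_mul t)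
    intro y
    have := aux_ptwise t (y i) ht
    simpa [pow_two] using this
  rw [integral_add intA intA', integral_const_mul, integral_add intB intB'] at hmono
  simp only at hsA ⊢
  rw [← hsA, ← hsB] at hmono
  nlinarith [hmono]

end main2

/-- Let `θ` be uniformly distributed on the unit sphere `S^{n−1}` in `ℝⁿ` (`n ≥ 2`), i.e.
`σ` is the unique rotation-invariant probability measure carried by the unit sphere, and
let `φ(t) = E e^{t θ₁}`. Then `φ′(t) ≤ t φ″(t)` for every `t > 0`. -/
theorem sphere_mgf_deriv_ineq {n : ℕ} (hn : 2 ≤ n)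
    (σ : Measure (EuclideanSpace ℝ (Fin n))) [IsProbabilityMeasure σ]
    (hrot : ∀ O : EuclideanSpace ℝ (Fin n) ≃ₗᵢ[ℝ] EuclideanSpace ℝ (Fin n), σ.map O = σ)
    (hsph : σ (Metric.sphere (0 : EuclideanSpace ℝ (Fin n)) 1) = 1) :
    ∀ t : ℝ, 0 < t →
      deriv (fun s => ∫ y, Real.exp (s * y ⟨0, by omega⟩) ∂σ) t ≤
        t * deriv (deriv fun s => ∫ y, Real.exp (s * y ⟨0, by omega⟩) ∂σ) t :=
  sphere_mgf_deriv_ineq_aux σ hrot hsph ⟨0, by omega⟩
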